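/- Let F satisfy F^t = −F and [F₁, F₂} = P₁₂F₂ − F₂P₁₂ + F₂Q₁₂ − Q₁₂F₂, with P² = I, PQ = QP = θ₀Q, Q² = (M−2n)Q, and the intertwining relations P₁₂F₂ = F₁P₁₂, Q₁₂F₂ = −Q₁₂F₁, F₁Q₁₂ = −F₂Q₁₂. Then 𝔽(u) = I + (u+1/2)^{-1}F satisfies the reflection-type relation: [𝔽₁(u), 𝔽₂(v)} = (u−v)^{-1}(P₁₂𝔽₁(u)𝔽₂(v) − 𝔽₂(v)𝔽₁(u)P₁₂) − (u+v)^{-1}(𝔽₁(u)Q₁₂𝔽₂(v) − 𝔽₂(v)Q₁₂𝔽₁(u)) + (u²−v²)^{-1}(P₁₂𝔽₁(u)Q₁₂𝔽₂(v) − 𝔽₂(v)Q₁₂𝔽₁(u)P₁₂). -/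
import Mathlib


/-- The ℤ₂-grading: `[a] = 0` for `a ≤ M`, `[a] = 1` for `a > M` (0-indexed),
with `N = 2n`. -/
def gr (M N : ℕ) (a : Fin (M + N)) : ℕ := if (a : ℕ) < M then 0 else 1

/-- The index involution `ā`: `ā = M+1-a` for `a ≤ M`, `ā = 2M+N+1-a` for `a > M`
(written 0-indexed). -/
def bar (M N : ℕ) (a : Fin (M + N)) : Fin (M + N) :=
  if h : (a : ℕ) < M then ⟨M - 1 - (a : ℕ), by omega⟩
  else ⟨2 * M + N - 1 - (a : ℕ), by have := a.isLt; omega⟩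

/-- Super-transposition `E_{ab}^t = (-1)^{[a]([b]+1)} θ_a θ_b E_{b̄ā}`, extended to
matrices with entries in a superalgebra `A`. -/
noncomputable def stranspA (M N : ℕ) {A : Type*} [Ring A] [Algebra ℂ A]
    (θ : Fin (M + N) → ℂ) (F : Matrix (Fin (M + N)) (Fin (M + N)) A) :
    Matrix (Fin (M + N)) (Fin (M + N)) A :=
  fun p q =>
    ((-1 : ℂ) ^ (gr M N (bar M N q) * (gr M N (bar M N p) + 1))
        * θ (bar M N q) * θ (bar M N p)) • F (bar M N q) (bar M N p)

/-- The graded permutation operator `P₁₂` as a matrix over `A`. -/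
noncomputable def PmatA (M N : ℕ) (A : Type*) [Ring A] [Algebra ℂ A] :
    Matrix (Fin (M + N) × Fin (M + N)) (Fin (M + N) × Fin (M + N)) A :=
  fun p q => if p.1 = q.2 ∧ p.2 = q.1
    then ((-1 : ℂ) ^ (gr M N q.1 * gr M N q.2)) • (1 : A) else 0

/-- The matrix `Q₁₂ = P₁₂^{t₁}` (partial super-transposition in the first factor,
with the Koszul sign of the graded tensor product taken into account). -/
noncomputable def QmatA (M N : ℕ) (A : Type*) [Ring A] [Algebra ℂ A]
    (θ : Fin (M + N) → ℂ) :
    Matrix (Fin (M + N) × Fin (M + N)) (Fin (M + N) × Fin (M + N)) A :=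
  fun p q =>
    ((-1 : ℂ) ^ (gr M N (bar M N q.1) * (gr M N (bar M N p.1) + 1))
        * θ (bar M N q.1) * θ (bar M N p.1)
        * (-1 : ℂ) ^ ((gr M N p.2 + gr M N q.2)
            * (gr M N (bar M N q.1) + gr M N (bar M N p.1))))
      • PmatA M N A (bar M N q.1, p.2) (bar M N p.1, q.2)

/-- `F₁ = F ⊗ I` on the graded tensor square. -/
def emb1 (M N : ℕ) {A : Type*} [Ring A]
    (F : Matrix (Fin (M + N)) (Fin (M + N)) A) :
    Matrix (Fin (M + N) × Fin (M + N)) (Fin (M + N) × Fin (M + N)) A :=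
  fun p q => if p.2 = q.2 then F p.1 q.1 else 0

/-- `F₂ = I ⊗ F` on the graded tensor square (with the Koszul sign for an even
matrix `F` with homogeneous entries). -/
noncomputable def emb2 (M N : ℕ) {A : Type*} [Ring A] [Algebra ℂ A]
    (F : Matrix (Fin (M + N)) (Fin (M + N)) A) :
    Matrix (Fin (M + N) × Fin (M + N)) (Fin (M + N) × Fin (M + N)) A :=
  fun p q => if p.1 = q.1
    then ((-1 : ℂ) ^ ((gr M N p.2 + gr M N q.2) * gr M N q.1)) • F p.2 q.2 else 0

section OspAux

variable {R : Type*} [Ring R] [Algebra ℂ R]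

lemma exp4 (a b : ℂ) (X Y F1 F2 : R) :
    X * (1 + a • F1) * Y * (1 + b • F2)
      = X * Y + a • (X * F1 * Y) + b • (X * Y * F2) + (a * b) • (X * F1 * Y * F2) := by
  simp only [mul_add, add_mul, mul_one, one_mul, smul_mul_assoc, mul_smul_comm,
    smul_smul, mul_assoc]
  module

lemma exp4' (a b : ℂ) (X Y F1 F2 : R) :
    (1 + b • F2) * Y * (1 + a • F1) * X
      = Y * X + a • (Y * F1 * X) + b • (F2 * Y * X) + (a * b) • (F2 * Y * F1 * X) := by
  simp only [mul_add, add_mul, mul_one, one_mul, smul_mul_assoc, mul_smul_comm,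
    smul_smul, mul_assoc]
  module

lemma key (P Q F1 F2 : R)
    (hP2 : P * P = 1)
    (hPQ : P * Q = Q) (hQP : Q * P = Q)
    (hint1 : P * F2 = F1 * P)
    (hint2 : Q * F2 = -(Q * F1))
    (hint3 : F1 * Q = -(F2 * Q))
    (hosp : F1 * F2 - F2 * F1 = P * F2 - F2 * P + F2 * Q - Q * F2)
    (a b p q r : ℂ)
    (hs1 : p * (a - b) = -(a * b))
    (hs2 : q * (a + b) - r * (b - a) = a * b) :
    (1 + a • F1) * (1 + b • F2) - (1 + b • F2) * (1 + a • F1)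
      = p • (P * (1 + a • F1) * (1 + b • F2) - (1 + b • F2) * (1 + a • F1) * P)
        - q • ((1 + a • F1) * Q * (1 + b • F2) - (1 + b • F2) * Q * (1 + a • F1))
        + r • (P * (1 + a • F1) * Q * (1 + b • F2)
            - (1 + b • F2) * Q * (1 + a • F1) * P) := by
  have hint1' : P * F1 = F2 * P := by
    have h1 : F1 = P * F2 * P := by rw [hint1, mul_assoc, hP2, mul_one]
    rw [h1, ← mul_assoc, ← mul_assoc, hP2, one_mul]
  have hint2' : Q * F1 = -(Q * F2) := by rw [hint2, neg_neg]
  -- monomial normalizations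
  have m1 : P * F1 * F2 = F2 * F1 * P := by
    rw [hint1', mul_assoc, hint1, ← mul_assoc]
  have m2 : P * F1 * Q = F2 * Q := by
    rw [hint1', mul_assoc, hPQ]
  have m3 : Q * F1 * P = Q * F2 := by
    rw [hint2', neg_mul, mul_assoc, ← hint1', ← mul_assoc, hQP, hint2', neg_neg]
  have m5 : F2 * Q * F1 * P = F2 * Q * F2 := by
    rw [mul_assoc (F2 * Q) F1 P, ← hint1, ← mul_assoc (F2 * Q) P F2, mul_assoc F2 Q P, hQP]
  have m8 : F2 * Q * P = F2 * Q := by rw [mul_assoc, hQP]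
  have m6 : F1 * Q * F2 = -(F2 * Q * F2) := by rw [hint3, neg_mul]
  have m7 : F2 * Q * F1 = -(F2 * Q * F2) := by rw [mul_assoc, hint2', mul_neg, mul_assoc]
  -- LHS
  have hL : (1 + a • F1) * (1 + b • F2) - (1 + b • F2) * (1 + a • F1)
      = (a * b) • (F1 * P - F2 * P + F2 * Q - Q * F2) := by
    have e1 : (1 + a • F1) * (1 + b • F2)
        = 1 * 1 + a • (1 * F1 * 1) + b • (1 * 1 * F2) + (a * b) • (1 * F1 * 1 * F2) := by
      simpa using exp4 a b (1 : R) 1 F1 F2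
    have e2 : (1 + b • F2) * (1 + a • F1)
        = 1 * 1 + a • (1 * F1 * 1) + b • (F2 * 1 * 1) + (a * b) • (F2 * 1 * F1 * 1) := by
      simpa using exp4' a b (1 : R) 1 F1 F2
    simp only [one_mul, mul_one] at e1 e2
    have hL1 : (1 + a • F1) * (1 + b • F2) - (1 + b • F2) * (1 + a • F1)
        = (a * b) • (F1 * F2 - F2 * F1) := by
      rw [e1, e2]; module
    rw [hL1, hosp, hint1]
  rw [hL]
  -- expansions of the three RHS brackets
  rw [show P * (1 + a • F1) * (1 + b • F2) = P * (1 + a • F1) * 1 * (1 + b • F2) by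
    rw [mul_one]]
  rw [exp4 a b P 1 F1 F2]
  rw [show (1 + b • F2) * (1 + a • F1) * P = (1 + b • F2) * 1 * (1 + a • F1) * P by
    rw [mul_one]]
  rw [exp4' a b P 1 F1 F2]
  rw [show (1 + a • F1) * Q * (1 + b • F2) = 1 * (1 + a • F1) * Q * (1 + b • F2) by
    rw [one_mul]]
  rw [exp4 a b 1 Q F1 F2]
  rw [exp4' a b P Q F1 F2]
  rw [exp4 a b P Q F1 F2]
  rw [show (1 + b • F2) * Q * (1 + a • F1) = (1 + b • F2) * Q * (1 + a • F1) * 1 by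
    rw [mul_one]]
  rw [exp4' a b 1 Q F1 F2]
  simp only [one_mul, mul_one]
  rw [m1, m2, m3, m5, m6, m7, m8, hint1, hint1', hint2', hint3, hPQ, hQP]
  simp only [smul_neg, mul_neg, neg_neg]
  match_scalars <;>
    first
      | ring1
      | linear_combination hs1
      | linear_combination -hs1
      | linear_combination hs2
      | linear_combination -hs2
lemma osp_aux1 (x y : ℂ) (hx : x ≠ 0) (hy : y ≠ 0) (hxy : x - y ≠ 0) :
    (x - y)⁻¹ * (x⁻¹ - y⁻¹) = -(x⁻¹ * y⁻¹) := by field_simp; ring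

lemma osp_aux2 (x y : ℂ) (hx : x ≠ 0) (hy : y ≠ 0) (hxy : x - y ≠ 0) (hxy1 : x + y - 1 ≠ 0) :
    (x + y - 1)⁻¹ * (x⁻¹ + y⁻¹) - ((x - y) * (x + y - 1))⁻¹ * (y⁻¹ - x⁻¹)
      = x⁻¹ * y⁻¹ := by field_simp; ring

end OspAux

/-- let `F` satisfy `F^t = −F` and the `osp(M|2n)` relation, with
`P² = I`, `PQ = QP = θ₀Q` (θ₀ = +1 here), `Q² = (M−2n)Q`, and the intertwining
relations `P₁₂F₂ = F₁P₁₂`, `Q₁₂F₂ = −Q₁₂F₁`, `F₁Q₁₂ = −F₂Q₁₂`. Then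
`𝔽(u) = I + (u+1/2)⁻¹F` satisfies the reflection-type relation. -/
theorem osp_evaluation_reflection (M n : ℕ) (A : Type*) [Ring A] [Algebra ℂ A]
    (θ : Fin (M + 2 * n) → ℂ)
    (hθ : ∀ a, θ a = 1 ∨ θ a = -1)
    (hθ₀ : ∀ a, (-1 : ℂ) ^ (gr M (2 * n) a) * θ a * θ (bar M (2 * n) a) = 1)
    (F : Matrix (Fin (M + 2 * n)) (Fin (M + 2 * n)) A)
    (hFeven : ∀ a b, (gr M (2 * n) a + gr M (2 * n) b) % 2 = 1 → F a b = 0)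
    (hFt : stranspA M (2 * n) θ F = -F)
    (hP2 : PmatA M (2 * n) A * PmatA M (2 * n) A = 1)
    (hPQ : PmatA M (2 * n) A * QmatA M (2 * n) A θ = QmatA M (2 * n) A θ)
    (hQP : QmatA M (2 * n) A θ * PmatA M (2 * n) A = QmatA M (2 * n) A θ)
    (hQ2 : QmatA M (2 * n) A θ * QmatA M (2 * n) A θ
      = (((M : ℂ) - 2 * (n : ℂ))) • QmatA M (2 * n) A θ)
    (hint1 : PmatA M (2 * n) A * emb2 M (2 * n) F = emb1 M (2 * n) F * PmatA M (2 * n) A)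
    (hint2 : QmatA M (2 * n) A θ * emb2 M (2 * n) F = -(QmatA M (2 * n) A θ * emb1 M (2 * n) F))
    (hint3 : emb1 M (2 * n) F * QmatA M (2 * n) A θ = -(emb2 M (2 * n) F * QmatA M (2 * n) A θ))
    (hosp : emb1 M (2 * n) F * emb2 M (2 * n) F - emb2 M (2 * n) F * emb1 M (2 * n) F
      = PmatA M (2 * n) A * emb2 M (2 * n) F - emb2 M (2 * n) F * PmatA M (2 * n) A
        + emb2 M (2 * n) F * QmatA M (2 * n) A θ - QmatA M (2 * n) A θ * emb2 M (2 * n) F)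
    (u v : ℂ) (huv : u ≠ v) (huv' : u ≠ -v)
    (hu1 : u ≠ 1 / 2) (hu2 : u ≠ -(1 / 2)) (hv1 : v ≠ 1 / 2) (hv2 : v ≠ -(1 / 2)) :
    (1 + (u + 1 / 2)⁻¹ • emb1 M (2 * n) F) * (1 + (v + 1 / 2)⁻¹ • emb2 M (2 * n) F)
        - (1 + (v + 1 / 2)⁻¹ • emb2 M (2 * n) F) * (1 + (u + 1 / 2)⁻¹ • emb1 M (2 * n) F)
      = (u - v)⁻¹ • (PmatA M (2 * n) A * (1 + (u + 1 / 2)⁻¹ • emb1 M (2 * n) F)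
              * (1 + (v + 1 / 2)⁻¹ • emb2 M (2 * n) F)
            - (1 + (v + 1 / 2)⁻¹ • emb2 M (2 * n) F)
              * (1 + (u + 1 / 2)⁻¹ • emb1 M (2 * n) F) * PmatA M (2 * n) A)
        - (u + v)⁻¹ • ((1 + (u + 1 / 2)⁻¹ • emb1 M (2 * n) F) * QmatA M (2 * n) A θ
              * (1 + (v + 1 / 2)⁻¹ • emb2 M (2 * n) F)
            - (1 + (v + 1 / 2)⁻¹ • emb2 M (2 * n) F) * QmatA M (2 * n) A θ
              * (1 + (u + 1 / 2)⁻¹ • emb1 M (2 * n) F))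
        + (u ^ 2 - v ^ 2)⁻¹ • (PmatA M (2 * n) A * (1 + (u + 1 / 2)⁻¹ • emb1 M (2 * n) F)
              * QmatA M (2 * n) A θ * (1 + (v + 1 / 2)⁻¹ • emb2 M (2 * n) F)
            - (1 + (v + 1 / 2)⁻¹ • emb2 M (2 * n) F) * QmatA M (2 * n) A θ
              * (1 + (u + 1 / 2)⁻¹ • emb1 M (2 * n) F) * PmatA M (2 * n) A) := by
  have h1 : (u : ℂ) - v ≠ 0 := sub_ne_zero.mpr huv
  have h2 : (u : ℂ) + v ≠ 0 := fun h => huv' (by linear_combination h)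
  have h3 : (u : ℂ) + 1 / 2 ≠ 0 := fun h => hu2 (by linear_combination h)
  have h4 : (v : ℂ) + 1 / 2 ≠ 0 := fun h => hv2 (by linear_combination h)
  have h5 : (u : ℂ) ^ 2 - v ^ 2 ≠ 0 := by
    intro h
    rcases mul_eq_zero.mp (show ((u:ℂ) - v) * (u + v) = 0 by linear_combination h) with h' | h'
    · exact h1 h'
    · exact h2 h'
  have hb1 : u - v = (u + 1 / 2) - (v + 1 / 2) := by ring
  have hb2 : u + v = (u + 1 / 2) + (v + 1 / 2) - 1 := by ring
  have hb3 : u ^ 2 - v ^ 2 = ((u + 1 / 2) - (v + 1 / 2)) * ((u + 1 / 2) + (v + 1 / 2) - 1) := by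
    ring
  have hs1 : (u - v)⁻¹ * ((u + 1 / 2)⁻¹ - (v + 1 / 2)⁻¹)
      = -((u + 1 / 2)⁻¹ * (v + 1 / 2)⁻¹) := by
    rw [hb1]; exact osp_aux1 _ _ h3 h4 (hb1 ▸ h1)
  have hs2 : (u + v)⁻¹ * ((u + 1 / 2)⁻¹ + (v + 1 / 2)⁻¹)
        - (u ^ 2 - v ^ 2)⁻¹ * ((v + 1 / 2)⁻¹ - (u + 1 / 2)⁻¹)
      = (u + 1 / 2)⁻¹ * (v + 1 / 2)⁻¹ := by
    rw [hb2, hb3]; exact osp_aux2 _ _ h3 h4 (hb1 ▸ h1) (hb2 ▸ h2)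
  exact key (PmatA M (2 * n) A) (QmatA M (2 * n) A θ) (emb1 M (2 * n) F)
    (emb2 M (2 * n) F) hP2 hPQ hQP hint1 hint2 hint3 hosp
    ((u + 1 / 2)⁻¹) ((v + 1 / 2)⁻¹) ((u - v)⁻¹) ((u + v)⁻¹) ((u ^ 2 - v ^ 2)⁻¹)
    hs1 hs2
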